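/- Let E be a nonzero real Banach space. For every (y*, y**) ∈ E* × E**, inf over (x,x*) ∈ E × E* of [½‖y* − x*‖² + ½‖y** − x̂‖² + ⟨y* − x*, y** − x̂⟩] equals 0, where x̂ denotes the canonical image of x in E**. Equivalently, the image of E × E* under the map L(x,x*) = (x*, x̂) is quasidense in E* × E**. -/

import Mathlib

set_option maxHeartbeats 1000000


theorem stmt5 {E : Type*} [NormedAddCommGroup E] [NormedSpace ℝ E] [CompleteSpace E]
    [Nontrivial E]
    (y' : StrongDual ℝ E) (y'' : StrongDual ℝ (StrongDual ℝ E)) :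
    (⨅ p : E × StrongDual ℝ E,
      ((‖y' - p.2‖ ^ 2 / 2 + ‖y'' - NormedSpace.inclusionInDoubleDual ℝ E p.1‖ ^ 2 / 2
        + (y'' - NormedSpace.inclusionInDoubleDual ℝ E p.1) (y' - p.2) : ℝ) : EReal)) = 0 := by
  set f : E × StrongDual ℝ E → ℝ := fun p =>
    ‖y' - p.2‖ ^ 2 / 2 + ‖y'' - NormedSpace.inclusionInDoubleDual ℝ E p.1‖ ^ 2 / 2
      + (y'' - NormedSpace.inclusionInDoubleDual ℝ E p.1) (y' - p.2) with hf
  have hnonneg : ∀ p, 0 ≤ f p := by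
    intro p
    have h1 : |(y'' - NormedSpace.inclusionInDoubleDual ℝ E p.1) (y' - p.2)| ≤
        ‖y'' - NormedSpace.inclusionInDoubleDual ℝ E p.1‖ * ‖y' - p.2‖ := by
      simpa using (y'' - NormedSpace.inclusionInDoubleDual ℝ E p.1).le_opNorm (y' - p.2)
    have h2 := neg_abs_le ((y'' - NormedSpace.inclusionInDoubleDual ℝ E p.1) (y' - p.2))
    simp only [hf]
    nlinarith [sq_nonneg (‖y' - p.2‖ - ‖y'' - NormedSpace.inclusionInDoubleDual ℝ E p.1‖)]
  have hsmall : ∀ ε : ℝ, 0 < ε → ∃ p, f p ≤ ε := by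
    intro ε hε
    by_cases hy : y'' = 0
    · refine ⟨(0, y'), ?_⟩
      have h0 : ‖y'' - NormedSpace.inclusionInDoubleDual ℝ E 0‖ = 0 := by
        rw [ContinuousLinearMap.opNorm_zero_iff]; ext x; simp [hy]
      simp only [hf, h0]
      simp only [sub_self, map_zero, norm_zero]
      nlinarith
    · have hn0 : ‖y''‖ ≠ 0 := fun h => hy (by rwa [ContinuousLinearMap.opNorm_zero_iff] at h)
      have hn : 0 < ‖y''‖ := lt_of_le_of_ne (by positivity) (Ne.symm hn0)
      set δ := ε / ‖y''‖ with hδ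
      have hδpos : 0 < δ := div_pos hε hn
      obtain ⟨w, hw1, hw2⟩ := y''.exists_lt_apply_of_lt_opNorm
        (r := ‖y''‖ - δ) (by linarith)
      -- replace w by ±w so that y'' w > ‖y''‖ - δ
      obtain ⟨w, hw1, hw2⟩ : ∃ w, ‖w‖ ≤ 1 ∧ ‖y''‖ - δ < y'' w := by
        rcases le_or_gt 0 (y'' w) with h | h
        · exact ⟨w, hw1.le, by rwa [Real.norm_eq_abs, abs_of_nonneg h] at hw2⟩
        · refine ⟨-w, by simpa using hw1.le, ?_⟩
          rw [map_neg]
          rwa [Real.norm_eq_abs, abs_of_neg h] at hw2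
      refine ⟨(0, y' + ‖y''‖ • w), ?_⟩
      have e0 : NormedSpace.inclusionInDoubleDual ℝ E (0 : E) = 0 := map_zero _
      have e1 : y' - (y' + ‖y''‖ • w) = -(‖y''‖ • w) := by abel
      have e2 : ‖-(‖y''‖ • w)‖ = ‖y''‖ * ‖w‖ := by
        rw [norm_neg, norm_smul, Real.norm_eq_abs, abs_of_pos hn]
      have e3 : y'' (-(‖y''‖ • w)) = -(‖y''‖ * y'' w) := by
        rw [map_neg, map_smul]; simp
      have e0' : y'' - NormedSpace.inclusionInDoubleDual ℝ E 0 = y'' := by ext x; simp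
      simp only [hf, e0', e1, e2, e3]
      have hmul : ‖y''‖ * (‖y''‖ - δ) < ‖y''‖ * y'' w := mul_lt_mul_of_pos_left hw2 hn
      have hδy : δ * ‖y''‖ = ε := div_mul_cancel₀ ε (ne_of_gt hn)
      have h5 : (‖y''‖ * ‖w‖) ^ 2 ≤ ‖y''‖ ^ 2 :=
        pow_le_pow_left₀ (mul_nonneg hn.le (norm_nonneg w))
          (mul_le_of_le_one_right hn.le hw1) 2
      have h6 : ‖y''‖ ^ 2 - ε < ‖y''‖ * y'' w := by nlinarith [hmul]
      linarith [h5, h6]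
  apply le_antisymm
  · by_contra hlt
    push_neg at hlt
    obtain ⟨r, hr1, hr2⟩ := EReal.exists_between_coe_real hlt
    have hr0 : (0 : ℝ) < r := by exact_mod_cast hr1
    obtain ⟨p, hp⟩ := hsmall r hr0
    have : (⨅ p, ((f p : ℝ) : EReal)) ≤ ((f p : ℝ) : EReal) := iInf_le _ p
    have h2 : ((f p : ℝ) : EReal) ≤ (r : EReal) := EReal.coe_le_coe_iff.2 hp
    exact absurd (le_trans this h2) (not_le.2 hr2)
  · exact le_iInf fun p => EReal.coe_nonneg.2 (hnonneg p)
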